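/- The function f(y) defined by f(y) = (4/3)cos²(y/4) for |y| ≤ 2π and f(y) = 0 for |y| ≥ 2π is continuously differentiable on ℝ and satisfies f = (f²)'' + f² at every point y with |y| ≠ 2π. -/

import Mathlib

open Real

noncomputable def rosenauHymanCompacton (y : ℝ) : ℝ :=
  if |y| ≤ 2 * Real.pi then (4 / 3) * Real.cos (y / 4) ^ 2 else 0

namespace RHaux

noncomputable def F (y : ℝ) : ℝ := (4 / 3) * Real.cos (y / 4) ^ 2
noncomputable def F' (y : ℝ) : ℝ := -(2 / 3) * Real.cos (y / 4) * Real.sin (y / 4)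
noncomputable def G (y : ℝ) : ℝ := if |y| ≤ 2 * Real.pi then F' y else 0
noncomputable def D1 (y : ℝ) : ℝ := -(16 / 9) * Real.cos (y / 4) ^ 3 * Real.sin (y / 4)
noncomputable def D2 (y : ℝ) : ℝ :=
  -(4 / 9) * (Real.cos (y / 4) ^ 4 - 3 * Real.cos (y / 4) ^ 2 * Real.sin (y / 4) ^ 2)

lemma hc (y : ℝ) : HasDerivAt (fun y : ℝ => Real.cos (y / 4)) (-Real.sin (y / 4) * (1 / 4)) y := by
  simpa [Function.comp_def] using (Real.hasDerivAt_cos (y / 4)).comp y ((hasDerivAt_id y).div_const 4)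

lemma hs (y : ℝ) : HasDerivAt (fun y : ℝ => Real.sin (y / 4)) (Real.cos (y / 4) * (1 / 4)) y := by
  simpa [Function.comp_def] using (Real.hasDerivAt_sin (y / 4)).comp y ((hasDerivAt_id y).div_const 4)

lemma hF (y : ℝ) : HasDerivAt F (F' y) y := by
  have h := ((hc y).pow 2).const_mul (4 / 3 : ℝ)
  convert h using 1
  · rfl
  · rfl
  · rfl
  simp [F']
  ring

lemma hD1 (y : ℝ) : HasDerivAt D1 (D2 y) y := by
  have h := (((hc y).pow 3).mul (hs y)).const_mul (-(16 / 9) : ℝ)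
  convert h using 1
  · rfl
  · rfl
  · ext z; simp [D1]; ring
  · simp [D2]; ring

lemma F_boundary_pos : F (2 * Real.pi) = 0 := by
  simp [F, show (2 : ℝ) * Real.pi / 4 = Real.pi / 2 by ring]

lemma F_boundary_neg : F (-(2 * Real.pi)) = 0 := by
  simp [F, show -((2 : ℝ) * Real.pi) / 4 = -(Real.pi / 2) by ring]

lemma F'_boundary_pos : F' (2 * Real.pi) = 0 := by
  simp [F', show (2 : ℝ) * Real.pi / 4 = Real.pi / 2 by ring]

lemma F'_boundary_neg : F' (-(2 * Real.pi)) = 0 := by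
  simp [F', show -((2 : ℝ) * Real.pi) / 4 = -(Real.pi / 2) by ring]

lemma f_eq_F {y : ℝ} (h : |y| ≤ 2 * Real.pi) : rosenauHymanCompacton y = F y := by
  simp [rosenauHymanCompacton, F, h]

lemma f_eq_zero {y : ℝ} (h : ¬ |y| ≤ 2 * Real.pi) : rosenauHymanCompacton y = 0 := by
  simp [rosenauHymanCompacton, h]

lemma isOpen_lt_set : IsOpen {z : ℝ | |z| < 2 * Real.pi} :=
  isOpen_lt continuous_abs continuous_const

lemma isOpen_gt_set : IsOpen {z : ℝ | 2 * Real.pi < |z|} :=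
  isOpen_lt continuous_const continuous_abs

lemma ev_F {y : ℝ} (h : |y| < 2 * Real.pi) :
    rosenauHymanCompacton =ᶠ[nhds y] F := by
  filter_upwards [isOpen_lt_set.mem_nhds h] with z hz
  exact f_eq_F hz.le

lemma ev_zero {y : ℝ} (h : 2 * Real.pi < |y|) :
    rosenauHymanCompacton =ᶠ[nhds y] (fun _ => (0 : ℝ)) := by
  filter_upwards [isOpen_gt_set.mem_nhds h] with z hz
  exact f_eq_zero (not_le.mpr hz)

lemma EqOn_Icc : Set.EqOn rosenauHymanCompacton F (Set.Icc (-(2 * Real.pi)) (2 * Real.pi)) := by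
  intro z hz
  exact f_eq_F (abs_le.mpr ⟨hz.1, hz.2⟩)

lemma EqOn_Ici : Set.EqOn rosenauHymanCompacton (fun _ => (0 : ℝ)) (Set.Ici (2 * Real.pi)) := by
  intro z hz
  by_cases h : |z| ≤ 2 * Real.pi
  · have hz2 : z = 2 * Real.pi := le_antisymm ((abs_le.mp h).2) hz
    rw [f_eq_F h, hz2, F_boundary_pos]
  · exact f_eq_zero h

lemma EqOn_Iic : Set.EqOn rosenauHymanCompacton (fun _ => (0 : ℝ)) (Set.Iic (-(2 * Real.pi))) := by
  intro z hz
  by_cases h : |z| ≤ 2 * Real.pi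
  · have hz2 : z = -(2 * Real.pi) := le_antisymm hz ((abs_le.mp h).1)
    rw [f_eq_F h, hz2, F_boundary_neg]
  · exact f_eq_zero h

lemma hasDerivAt_f (y : ℝ) : HasDerivAt rosenauHymanCompacton (G y) y := by
  have hpi : (0 : ℝ) < Real.pi := Real.pi_pos
  rcases lt_trichotomy (|y|) (2 * Real.pi) with hlt | heq | hgt
  · have h := (hF y).congr_of_eventuallyEq (ev_F hlt)
    simpa [G, hlt.le] using h
  · have hG : G y = 0 := by
      rcases abs_eq (by positivity : (0:ℝ) ≤ 2 * Real.pi) |>.mp heq with h | h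
      · simp [G, heq.le, h, F'_boundary_pos]
      · simp [G, heq.le, h, F'_boundary_neg]
    rw [hG]
    rcases abs_eq (by positivity : (0:ℝ) ≤ 2 * Real.pi) |>.mp heq with h | h
    · -- y = 2π
      subst h
      have h1 : HasDerivWithinAt rosenauHymanCompacton 0
          (Set.Icc (-(2 * Real.pi)) (2 * Real.pi)) (2 * Real.pi) := by
        have := (hF (2 * Real.pi)).hasDerivWithinAt
          (s := Set.Icc (-(2 * Real.pi)) (2 * Real.pi))
        rw [F'_boundary_pos] at this
        exact this.congr EqOn_Icc (f_eq_F (by rw [abs_of_pos (by positivity)]))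
      have h2 : HasDerivWithinAt rosenauHymanCompacton 0
          (Set.Ici (2 * Real.pi)) (2 * Real.pi) := by
        have := (hasDerivAt_const (2 * Real.pi) (0 : ℝ)).hasDerivWithinAt
          (s := Set.Ici (2 * Real.pi))
        exact this.congr EqOn_Ici (EqOn_Ici (Set.self_mem_Ici))
      have h3 := h1.union h2
      rw [Set.Icc_union_Ici_eq_Ici (by linarith)] at h3
      exact h3.hasDerivAt (Ici_mem_nhds (by linarith))
    · -- y = -2π
      subst h
      have h1 : HasDerivWithinAt rosenauHymanCompacton 0
          (Set.Icc (-(2 * Real.pi)) (2 * Real.pi)) (-(2 * Real.pi)) := by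
        have := (hF (-(2 * Real.pi))).hasDerivWithinAt
          (s := Set.Icc (-(2 * Real.pi)) (2 * Real.pi))
        rw [F'_boundary_neg] at this
        exact this.congr EqOn_Icc (f_eq_F (by rw [abs_neg, abs_of_pos (by positivity)]))
      have h2 : HasDerivWithinAt rosenauHymanCompacton 0
          (Set.Iic (-(2 * Real.pi))) (-(2 * Real.pi)) := by
        have := (hasDerivAt_const (-(2 * Real.pi)) (0 : ℝ)).hasDerivWithinAt
          (s := Set.Iic (-(2 * Real.pi)))
        exact this.congr EqOn_Iic (EqOn_Iic (Set.self_mem_Iic))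
      have h3 := h2.union h1
      rw [Set.Iic_union_Icc_eq_Iic (by linarith)] at h3
      exact h3.hasDerivAt (Iic_mem_nhds (by linarith))
  · have h := (hasDerivAt_const y (0 : ℝ)).congr_of_eventuallyEq (ev_zero hgt)
    simpa [G, not_le.mpr hgt] using h

lemma continuous_G : Continuous G := by
  have : G = fun y => if |y| ≤ 2 * Real.pi then F' y else 0 := rfl
  rw [this]
  apply Continuous.if_le
  · exact (continuous_const.mul (Real.continuous_cos.comp (continuous_id.div_const 4))).mul
      (Real.continuous_sin.comp (continuous_id.div_const 4))
  · exact continuous_const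
  · exact continuous_abs
  · exact continuous_const
  · intro x hx
    rcases abs_eq (by positivity : (0:ℝ) ≤ 2 * Real.pi) |>.mp hx with h | h
    · rw [h, F'_boundary_pos]
    · rw [h, F'_boundary_neg]

end RHaux

open RHaux

theorem rosenauHyman_compacton_solves_K22 :
    ContDiff ℝ 1 rosenauHymanCompacton ∧
    ∀ y : ℝ, |y| ≠ 2 * Real.pi →
      rosenauHymanCompacton y
        = deriv (deriv (fun y : ℝ => rosenauHymanCompacton y ^ 2)) y
          + rosenauHymanCompacton y ^ 2 := by
  constructor
  · rw [contDiff_one_iff_deriv]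
    refine ⟨fun y => (hasDerivAt_f y).differentiableAt, ?_⟩
    have : deriv rosenauHymanCompacton = G := funext fun y => (hasDerivAt_f y).deriv
    rw [this]
    exact continuous_G
  · intro y hy
    rcases lt_or_gt_of_ne hy with hlt | hgt
    · -- inner region
      have hsq : ∀ z ∈ {z : ℝ | |z| < 2 * Real.pi},
          deriv (fun y : ℝ => rosenauHymanCompacton y ^ 2) z = D1 z := by
        intro z hz
        have hev : (fun y : ℝ => rosenauHymanCompacton y ^ 2) =ᶠ[nhds z] (fun y => F y ^ 2) :=
          (ev_F hz).mono fun w hw => by simp only [hw]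
        rw [hev.deriv_eq]
        have h := (hF z).pow 2
        have h2 : (2 : ℕ) * F z ^ (2 - 1) * F' z = D1 z := by
          simp [F, F', D1]; ring
        rw [h2] at h
        exact h.deriv
      have hev2 : deriv (fun y : ℝ => rosenauHymanCompacton y ^ 2) =ᶠ[nhds y] D1 := by
        filter_upwards [isOpen_lt_set.mem_nhds hlt] with z hz
        exact hsq z hz
      rw [hev2.deriv_eq, (hD1 y).deriv, f_eq_F hlt.le]
      have hpc := Real.sin_sq_add_cos_sq (y / 4)
      simp only [F, D2]
      nlinarith [hpc]
    · -- outer region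
      have hsq : ∀ z ∈ {z : ℝ | 2 * Real.pi < |z|},
          deriv (fun y : ℝ => rosenauHymanCompacton y ^ 2) z = 0 := by
        intro z hz
        have hev : (fun y : ℝ => rosenauHymanCompacton y ^ 2) =ᶠ[nhds z]
            (fun _ => (0 : ℝ)) := (ev_zero hz).mono fun w hw => by
          simp [hw]
        rw [hev.deriv_eq, deriv_const]
      have hev2 : deriv (fun y : ℝ => rosenauHymanCompacton y ^ 2) =ᶠ[nhds y]
          (fun _ => (0 : ℝ)) := by
        filter_upwards [isOpen_gt_set.mem_nhds hgt] with z hz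
        exact hsq z hz
      rw [hev2.deriv_eq, deriv_const, f_eq_zero (not_le.mpr hgt)]
      norm_num
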